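/- If φ: ℝ^d → ℝ is differentiable, absolutely convex, and attains a minimum at some x★, then its gradient is bounded: there exists M such that ‖∇φ(x)‖₂ ≤ M for all x ∈ ℝ^d. -/
import Mathlib


open scoped RealInnerProductSpace

/-- `φ` is absolutely convex: `φ(x) ≥ |φ(y) + ⟨∇φ(y), x−y⟩|` for all `x, y`. -/
def AbsolutelyConvex {d : ℕ} (φ : EuclideanSpace ℝ (Fin d) → ℝ) : Prop :=
  ∀ x y, |φ y + ⟪gradient φ y, x - y⟫| ≤ φ x

theorem stmt_16 {d : ℕ} (φ : EuclideanSpace ℝ (Fin d) → ℝ)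
    (hφ : Differentiable ℝ φ) (habs : AbsolutelyConvex φ)
    (hmin : ∃ xstar, ∀ x, φ xstar ≤ φ x) :
    ∃ M : ℝ, ∀ x, ‖gradient φ x‖ ≤ M := by
  obtain ⟨xs, _hxs⟩ := hmin
  obtain ⟨C, hC⟩ := (isCompact_closedBall xs 1).exists_bound_of_continuousOn
    hφ.continuous.continuousOn
  refine ⟨C + φ xs, fun y => ?_⟩
  set g := gradient φ y with hg
  have hC0 : 0 ≤ C :=
    le_trans (norm_nonneg _) (hC xs (Metric.mem_closedBall_self zero_le_one))
  have hm : 0 ≤ φ xs := by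
    have h := habs xs xs
    simp only [sub_self, inner_zero_right, add_zero] at h
    exact le_trans (abs_nonneg _) h
  by_cases h0 : g = 0
  · rw [h0, norm_zero]; linarith
  · set u : EuclideanSpace ℝ (Fin d) := ‖g‖⁻¹ • g with hu_def
    have hgne : ‖g‖ ≠ 0 := norm_ne_zero_iff.mpr h0
    have hu : ‖u‖ = 1 := by
      rw [hu_def, norm_smul, norm_inv, norm_norm, inv_mul_cancel₀ hgne]
    have hx : xs - u ∈ Metric.closedBall xs 1 := by
      rw [Metric.mem_closedBall, dist_eq_norm]
      have : xs - u - xs = -u := by abel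
      rw [this, norm_neg, hu]
    have hgu : ⟪g, u⟫ = ‖g‖ := by
      rw [hu_def, real_inner_smul_right, real_inner_self_eq_norm_mul_norm]
      field_simp
    -- from habs xs y : φ y + ⟪g, xs - y⟫ ≤ φ xs
    have h1 : φ y + ⟪g, xs - y⟫ ≤ φ xs := (abs_le.mp (habs xs y)).2
    -- from habs (xs - u) y : -(φ (xs-u)) ≤ φ y + ⟪g, xs - y⟫ - ⟪g, u⟫
    have h2 : -(φ (xs - u)) ≤ φ y + ⟪g, xs - y⟫ - ⟪g, u⟫ := by
      have h := (abs_le.mp (habs (xs - u) y)).1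
      have heq : xs - u - y = (xs - y) - u := by abel
      rw [heq, inner_sub_right] at h
      linarith
    have hCb : φ (xs - u) ≤ C := le_trans (le_abs_self _) (hC _ hx)
    rw [← hgu]
    linarith
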